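/- The crystal tensor product is partitioned into chains headed by the highest-weight elements: for natural numbers a, b and every pair (k, l) with k ≤ a and l ≤ b, there exists a unique pair (l₀, n) of natural numbers with l₀ ≤ min(a, b), n ≤ a + b − 2l₀, and f̃ⁿ(0, l₀) = some (k, l). (This is the sl(2) case of Kashiwara's theorem: every vector of the tensor-product crystal basis is a pure state lying in exactly one irreducible component.) -/
import Mathlib


/-- Kashiwara's lowering operator `f̃` on the crystal tensor product `B_a ⊗ B_b`,
modeled on pairs `(k, l)` of lowering-step counters (`k ≤ a`, `l ≤ b`):
`f̃(k,l) = (k+1, l)` if `a - k > l`; `f̃(k,l) = (k, l+1)` if `a - k ≤ l` and `l < b`;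
`f̃(k,l) = none` otherwise. -/
def ftil (a b : ℕ) (p : ℕ × ℕ) : Option (ℕ × ℕ) :=
  if p.2 < a - p.1 then some (p.1 + 1, p.2)
  else if p.2 < b then some (p.1, p.2 + 1)
  else none

/-- Kashiwara's raising operator `ẽ` on the crystal tensor product `B_a ⊗ B_b`:
`ẽ(k,l) = (k-1, l)` if `a - k ≥ l` and `k > 0`; `ẽ(k,l) = (k, l-1)` if `a - k < l`;
`ẽ(k,l) = none` otherwise. -/
def etil (a b : ℕ) (p : ℕ × ℕ) : Option (ℕ × ℕ) :=
  if p.2 ≤ a - p.1 ∧ 0 < p.1 then some (p.1 - 1, p.2)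
  else if a - p.1 < p.2 then some (p.1, p.2 - 1)
  else none

/-- `n`-fold application of a partially defined crystal operator, propagating `none`. -/
def iterOpt (f : ℕ × ℕ → Option (ℕ × ℕ)) (n : ℕ) (p : ℕ × ℕ) : Option (ℕ × ℕ) :=
  (fun o => o.bind f)^[n] (some p)

lemma iterOpt_succ (f : ℕ × ℕ → Option (ℕ × ℕ)) (n : ℕ) (p : ℕ × ℕ) :
    iterOpt f (n+1) p = (iterOpt f n p).bind f := by
  unfold iterOpt
  rw [Function.iterate_succ_apply']

lemma chain (a b : ℕ) : ∀ n l₀, l₀ ≤ a → l₀ ≤ b → n ≤ (a - l₀) + (b - l₀) →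
    iterOpt (ftil a b) n (0, l₀) =
      some (if n ≤ a - l₀ then (n, l₀) else (a - l₀, n - (a - l₀) + l₀)) := by
  intro n
  induction n with
  | zero =>
    intro l₀ h1 h2 h3
    rw [if_pos (Nat.zero_le _)]
    rfl
  | succ n ih =>
    intro l₀ h1 h2 h3
    rw [iterOpt_succ, ih l₀ h1 h2 (by omega)]
    rw [Option.bind_some]
    by_cases hc : n ≤ a - l₀
    · rw [if_pos hc]
      unfold ftil
      split_ifs <;> simp_all [Prod.ext_iff] <;> omega
    · rw [if_neg hc]
      unfold ftil
      split_ifs <;> simp_all [Prod.ext_iff] <;> omega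

/-- The crystal tensor product is partitioned into chains headed by the
highest-weight elements: every `(k, l)` with `k ≤ a`, `l ≤ b` is reached from a unique
highest-weight element `(0, l₀)` (with `l₀ ≤ min a b`) by a unique admissible number
`n ≤ a + b - 2·l₀` of lowering steps. -/
theorem crystal_tensor_partition (a b k l : ℕ) (hk : k ≤ a) (hl : l ≤ b) :
    ∃! x : ℕ × ℕ, x.1 ≤ min a b ∧ x.2 ≤ a + b - 2 * x.1 ∧
      iterOpt (ftil a b) x.2 (0, x.1) = some (k, l) := by
  by_cases hc : k + l ≤ a
  · refine ⟨(l, k), ⟨by omega, by omega, ?_⟩, ?_⟩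
    · rw [chain a b k l (by omega) hl (by omega), if_pos (by omega)]
    · rintro ⟨l₀, n⟩ ⟨h1, h2, h3⟩
      simp only at h1 h2 h3
      rw [chain a b n l₀ (by omega) (by omega) (by omega)] at h3
      by_cases hd : n ≤ a - l₀
      · rw [if_pos hd] at h3
        simp only [Option.some_inj, Prod.ext_iff] at h3 ⊢
        omega
      · rw [if_neg hd] at h3
        simp only [Option.some_inj, Prod.ext_iff] at h3 ⊢
        omega
  · refine ⟨(a - k, k + l - (a - k)), ⟨by omega, by omega, ?_⟩, ?_⟩
    · rw [chain a b (k + l - (a - k)) (a - k) (by omega) (by omega) (by omega),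
        if_neg (by omega)]
      simp only [Option.some_inj, Prod.ext_iff]
      omega
    · rintro ⟨l₀, n⟩ ⟨h1, h2, h3⟩
      simp only at h1 h2 h3
      rw [chain a b n l₀ (by omega) (by omega) (by omega)] at h3
      by_cases hd : n ≤ a - l₀
      · rw [if_pos hd] at h3
        simp only [Option.some_inj, Prod.ext_iff] at h3 ⊢
        omega
      · rw [if_neg hd] at h3
        simp only [Option.some_inj, Prod.ext_iff] at h3 ⊢
        omega
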